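/- Let n ≥ 2 and let w₁, w₂ ∈ ℝⁿ be nonzero vectors. Then there exists a vector v ∈ [−1,1]ⁿ with v·w₁ = 0 and v·w₂ = 0 such that at least n−2 coordinates of v lie in {−1,1}. -/

import Mathlib

/-- Let `n ≥ 2` and let `w₁, w₂ ∈ ℝⁿ` be nonzero vectors. Then there
is a vector `v ∈ [-1,1]ⁿ` orthogonal to both `w₁` and `w₂` such that at least `n - 2`
of its coordinates lie in `{-1,1}` (i.e. `v` lies on a 2-face of the cube). -/
theorem orthogonal_vector_on_two_face {n : ℕ} (hn : 2 ≤ n)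
    (w₁ w₂ : Fin n → ℝ) (h₁ : w₁ ≠ 0) (h₂ : w₂ ≠ 0) :
    ∃ v : Fin n → ℝ, (∀ i, -1 ≤ v i ∧ v i ≤ 1) ∧
      (∑ i, v i * w₁ i) = 0 ∧ (∑ i, v i * w₂ i) = 0 ∧
      ∃ I : Finset (Fin n), n - 2 ≤ I.card ∧ ∀ i ∈ I, v i = -1 ∨ v i = 1 := by
  classical
  set S : Set (Fin n → ℝ) :=
    {v | (∀ i, |v i| ≤ 1) ∧ (∑ i, v i * w₁ i) = 0 ∧ (∑ i, v i * w₂ i) = 0} with hSdef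
  have h0S : (0 : Fin n → ℝ) ∈ S := by
    refine ⟨fun i => by simp, by simp, by simp⟩
  -- S is closed
  have hclosed : IsClosed S := by
    have : S = (⋂ i, {v : Fin n → ℝ | |v i| ≤ 1}) ∩
        ({v : Fin n → ℝ | (∑ i, v i * w₁ i) = 0} ∩
         {v : Fin n → ℝ | (∑ i, v i * w₂ i) = 0}) := by
      ext v; simp [hSdef, and_assoc]
    rw [this]
    refine IsClosed.inter (isClosed_iInter fun i => ?_) (IsClosed.inter ?_ ?_)
    · exact isClosed_le ((continuous_apply i).abs) continuous_const
    · exact isClosed_eq (continuous_finset_sum _ fun i _ =>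
        (continuous_apply i).mul continuous_const) continuous_const
    · exact isClosed_eq (continuous_finset_sum _ fun i _ =>
        (continuous_apply i).mul continuous_const) continuous_const
  -- S is compact
  have hcomp : IsCompact S := by
    have hK : IsCompact (Set.pi Set.univ fun _ : Fin n => Set.Icc (-1 : ℝ) 1) :=
      isCompact_univ_pi fun _ => isCompact_Icc
    refine hK.of_isClosed_subset hclosed ?_
    intro v hv
    intro i _
    exact abs_le.mp (hv.1 i)
  -- S is convex
  have hconv : Convex ℝ S := by
    intro x hx y hy a b ha hb hab
    have hmem : ∀ i, (a • x + b • y) i = a * x i + b * y i := by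
      intro i; simp [Pi.add_apply, Pi.smul_apply, smul_eq_mul]
    refine ⟨fun i => ?_, ?_, ?_⟩
    · rw [hmem]
      calc |a * x i + b * y i| ≤ |a * x i| + |b * y i| := abs_add_le _ _
        _ = a * |x i| + b * |y i| := by
            rw [abs_mul, abs_mul, abs_of_nonneg ha, abs_of_nonneg hb]
        _ ≤ a * 1 + b * 1 := by gcongr; exacts [hx.1 i, hy.1 i]
        _ = 1 := by linarith
    · have : ∀ i, (a • x + b • y) i * w₁ i = a * (x i * w₁ i) + b * (y i * w₁ i) := by
        intro i; rw [hmem]; ring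
      simp only [this, Finset.sum_add_distrib, ← Finset.mul_sum, hx.2.1, hy.2.1]
      ring
    · have : ∀ i, (a • x + b • y) i * w₂ i = a * (x i * w₂ i) + b * (y i * w₂ i) := by
        intro i; rw [hmem]; ring
      simp only [this, Finset.sum_add_distrib, ← Finset.mul_sum, hx.2.2, hy.2.2]
      ring
  -- get an extreme point
  obtain ⟨v, hvext⟩ := hcomp.extremePoints_nonempty ⟨0, h0S⟩
  have hvS : v ∈ S := hvext.1
  -- the set of "free" coordinates
  set F : Finset (Fin n) := Finset.univ.filter (fun i => v i ≠ -1 ∧ v i ≠ 1) with hFdef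
  have habslt : ∀ i ∈ F, |v i| < 1 := by
    intro i hi
    rw [hFdef, Finset.mem_filter] at hi
    have h := abs_le.mp (hvS.1 i)
    rcases h with ⟨hl, hr⟩
    exact abs_lt.mpr ⟨lt_of_le_of_ne hl (Ne.symm hi.2.1), lt_of_le_of_ne hr hi.2.2⟩
  -- F has at most 2 elements
  have hFcard : F.card ≤ 2 := by
    by_contra hF
    push_neg at hF
    obtain ⟨i, j, k, hiF, hjF, hkF, hij, hik, hjk⟩ := Finset.two_lt_card_iff.mp hF
    -- three columns in ℝ² are linearly dependent
    set a : Fin 3 → (Fin 2 → ℝ) := ![![w₁ i, w₂ i], ![w₁ j, w₂ j], ![w₁ k, w₂ k]] with hadef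
    have hnotli : ¬ LinearIndependent ℝ a := by
      intro hli
      have := hli.fintype_card_le_finrank
      simp [Module.finrank_fintype_fun_eq_card] at this
    obtain ⟨g, hgsum, t, hgt⟩ := Fintype.not_linearIndependent_iff.mp hnotli
    -- the perturbation direction
    set d : Fin n → ℝ := fun m =>
      if m = i then g 0 else if m = j then g 1 else if m = k then g 2 else 0 with hddef
    have hdi : d i = g 0 := by simp [hddef]
    have hdj : d j = g 1 := by simp [hddef, hij.symm]
    have hdk : d k = g 2 := by simp [hddef, hik.symm, hjk.symm]
    have hdzero : ∀ m, m ≠ i → m ≠ j → m ≠ k → d m = 0 := by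
      intro m hmi hmj hmk; simp [hddef, hmi, hmj, hmk]
    -- the two key orthogonality sums for d
    have hsum0 : ∀ r : Fin 2, g 0 * a 0 r + g 1 * a 1 r + g 2 * a 2 r = 0 := by
      intro r
      have := congrFun hgsum r
      simpa [Fin.sum_univ_three, mul_comm] using this
    have hdsum : ∀ w : Fin n → ℝ, (∀ r : Fin 3, a r 0 = w₁ (![i,j,k] r)) →
        True := fun _ _ => trivial
    have hsupp : ∀ w : Fin n → ℝ,
        (∑ m, d m * w m) = g 0 * w i + g 1 * w j + g 2 * w k := by
      intro w
      have hsub : ({i, j, k} : Finset (Fin n)) ⊆ Finset.univ := Finset.subset_univ _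
      rw [← Finset.sum_subset hsub (by
        intro m _ hm
        simp only [Finset.mem_insert, Finset.mem_singleton] at hm
        push_neg at hm
        rw [hdzero m hm.1 hm.2.1 hm.2.2, zero_mul])]
      rw [Finset.sum_insert (by simp [hij, hik]),
        Finset.sum_insert (by simp [hjk]), Finset.sum_singleton]
      rw [hdi, hdj, hdk]; ring
    have hd1 : (∑ m, d m * w₁ m) = 0 := by
      rw [hsupp w₁]
      have := hsum0 0
      simpa [hadef] using this
    have hd2 : (∑ m, d m * w₂ m) = 0 := by
      rw [hsupp w₂]
      have := hsum0 1
      simpa [hadef] using this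
    -- choose ε > 0
    set ε : ℝ := min ((1 - |v i|) / (|g 0| + 1))
      (min ((1 - |v j|) / (|g 1| + 1)) ((1 - |v k|) / (|g 2| + 1))) with hεdef
    have hεpos : 0 < ε := by
      refine lt_min (div_pos ?_ ?_) (lt_min (div_pos ?_ ?_) (div_pos ?_ ?_))
      · linarith [habslt i hiF]
      · positivity
      · linarith [habslt j hjF]
      · positivity
      · linarith [habslt k hkF]
      · positivity
    have hkey : ∀ m, |ε * d m| ≤ 1 - |v m| := by
      have haux : ∀ (x c : ℝ), 0 ≤ x → ε ≤ x / (|c| + 1) → |ε * c| ≤ x := by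
        intro x c hx hε
        rw [abs_mul, abs_of_nonneg hεpos.le]
        calc ε * |c| ≤ (x / (|c| + 1)) * |c| := by
              apply mul_le_mul_of_nonneg_right hε (abs_nonneg c)
          _ ≤ (x / (|c| + 1)) * (|c| + 1) := by
              apply mul_le_mul_of_nonneg_left (by linarith) (by positivity)
          _ = x := by field_simp
      intro m
      by_cases hmi : m = i
      · subst hmi; rw [hdi]
        exact haux _ _ (by linarith [habslt m hiF]) (min_le_left _ _)
      by_cases hmj : m = j
      · subst hmj; rw [hdj]
        exact haux _ _ (by linarith [habslt m hjF])
          (le_trans (min_le_right _ _) (min_le_left _ _))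
      by_cases hmk : m = k
      · subst hmk; rw [hdk]
        exact haux _ _ (by linarith [habslt m hkF])
          (le_trans (min_le_right _ _) (min_le_right _ _))
      · rw [hdzero m hmi hmj hmk, mul_zero, abs_zero]
        linarith [hvS.1 m]
    -- v ± ε d ∈ S
    have hmemS : ∀ s : ℝ, s = 1 ∨ s = -1 → v + (s * ε) • d ∈ S := by
      intro s hs
      have habs1 : |s| = 1 := by rcases hs with rfl | rfl <;> simp
      refine ⟨fun m => ?_, ?_, ?_⟩
      · have : (v + (s * ε) • d) m = v m + s * (ε * d m) := by
          simp [Pi.add_apply, Pi.smul_apply, smul_eq_mul]; ring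
        rw [this]
        calc |v m + s * (ε * d m)| ≤ |v m| + |s * (ε * d m)| := abs_add_le _ _
          _ = |v m| + |ε * d m| := by rw [abs_mul, habs1, one_mul]
          _ ≤ |v m| + (1 - |v m|) := by linarith [hkey m]
          _ = 1 := by ring
      · have : ∀ m, (v + (s * ε) • d) m * w₁ m = v m * w₁ m + (s * ε) * (d m * w₁ m) := by
          intro m; simp [Pi.add_apply, Pi.smul_apply, smul_eq_mul]; ring
        simp only [this, Finset.sum_add_distrib, ← Finset.mul_sum, hvS.2.1, hd1]
        ring
      · have : ∀ m, (v + (s * ε) • d) m * w₂ m = v m * w₂ m + (s * ε) * (d m * w₂ m) := by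
          intro m; simp [Pi.add_apply, Pi.smul_apply, smul_eq_mul]; ring
        simp only [this, Finset.sum_add_distrib, ← Finset.mul_sum, hvS.2.2, hd2]
        ring
    have hx := hmemS (-1) (Or.inr rfl)
    have hy := hmemS 1 (Or.inl rfl)
    have hseg : v ∈ openSegment ℝ (v + ((-1 : ℝ) * ε) • d) (v + ((1 : ℝ) * ε) • d) := by
      refine ⟨1/2, 1/2, by norm_num, by norm_num, by norm_num, ?_⟩
      funext m
      simp [Pi.add_apply, Pi.smul_apply, smul_eq_mul]
      ring
    have := hvext.2 hy hx (by rwa [openSegment_symm] at hseg)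
    -- v + ε • d = v forces d = 0
    have hd0 : ∀ m, ε * d m = 0 := by
      intro m
      have h := congrFun this m
      simp [Pi.add_apply, Pi.smul_apply, smul_eq_mul] at h
      rcases h with h | h
      · exact absurd h hεpos.ne'
      · rw [h, mul_zero]
    -- contradiction with g t ≠ 0
    have : g t = 0 := by
      have h0 := hd0 i
      have h1 := hd0 j
      have h2 := hd0 k
      rw [hdi] at h0; rw [hdj] at h1; rw [hdk] at h2
      have hg0 : g 0 = 0 := by
        rcases mul_eq_zero.mp h0 with h | h
        · exact absurd h (ne_of_gt hεpos)
        · exact h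
      have hg1 : g 1 = 0 := by
        rcases mul_eq_zero.mp h1 with h | h
        · exact absurd h (ne_of_gt hεpos)
        · exact h
      have hg2 : g 2 = 0 := by
        rcases mul_eq_zero.mp h2 with h | h
        · exact absurd h (ne_of_gt hεpos)
        · exact h
      fin_cases t <;> assumption
    exact hgt this
  -- conclude
  refine ⟨v, fun i => abs_le.mp (hvS.1 i), hvS.2.1, hvS.2.2, Fᶜ, ?_, ?_⟩
  · have : Fᶜ.card = n - F.card := by
      rw [Finset.card_compl, Fintype.card_fin]
    rw [this]
    omega
  · intro i hi
    rw [Finset.mem_compl, hFdef, Finset.mem_filter] at hi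
    push_neg at hi
    by_cases h : v i = -1
    · exact Or.inl h
    · exact Or.inr (hi (Finset.mem_univ i) h)
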